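/- Let m, T, d ≥ 1 and a, M ≥ 0. For each pair i, i' ∈ {1, …, m} and each lag l ∈ {0, 1, …, T−1}, let A_{i i', l} be a real d×d matrix with operator norm ‖A_{i i', l}‖_op ≤ a, and let σ_{i i', l} ∈ ℝ. Suppose there exist nonnegative numbers τ_{i i'} with τ_{i i'} = τ_{i' i}, Σ_{l=0}^{T−1} |σ_{i i', l}| ≤ τ_{i i'} for all i, i', and max_i Σ_{i'=1}^m τ_{i i'} ≤ M. Then for every v = (v_1ᵀ, …, v_mᵀ)ᵀ ∈ ℝ^{md}, |Σ_{t=1}^T Σ_{t'=1}^T Σ_{i=1}^m Σ_{i'=1}^m σ_{i i', |t−t'|} · v_iᵀ A_{i i', |t−t'|} v_{i'}| ≤ 2 T a M Σ_{i=1}^m ‖v_i‖². -/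

import Mathlib

open Matrix

/-- The `ℓ²` operator (spectral) norm of a real matrix. -/
noncomputable def matOpNorm {n m : Type*} [Fintype n] [Fintype m] [DecidableEq n]
    (M : Matrix m n ℝ) : ℝ :=
  ‖LinearMap.toContinuousLinearMap (Matrix.toEuclideanLin M)‖

lemma dot_bound {d : ℕ} (B : Matrix (Fin d) (Fin d) ℝ) (v w : Fin d → ℝ) :
    |v ⬝ᵥ B *ᵥ w| ≤ matOpNorm B * ‖(WithLp.equiv 2 (Fin d → ℝ)).symm v‖
      * ‖(WithLp.equiv 2 (Fin d → ℝ)).symm w‖ := by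
  set ev := (WithLp.equiv 2 (Fin d → ℝ)).symm v with hev
  set ew := (WithLp.equiv 2 (Fin d → ℝ)).symm w with hew
  have h2 : B.toEuclideanLin ew = (WithLp.equiv 2 (Fin d → ℝ)).symm (B *ᵥ w) := rfl
  have h1 : v ⬝ᵥ B *ᵥ w = inner ℝ ev (B.toEuclideanLin ew) := by
    rw [h2]
    simp [hev, PiLp.inner_apply, RCLike.inner_apply, dotProduct, mul_comm]
  rw [h1]
  calc |inner ℝ ev (B.toEuclideanLin ew)| ≤ ‖ev‖ * ‖B.toEuclideanLin ew‖ :=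
        abs_real_inner_le_norm _ _
    _ ≤ ‖ev‖ * (matOpNorm B * ‖ew‖) := by
        apply mul_le_mul_of_nonneg_left _ (norm_nonneg _)
        exact (LinearMap.toContinuousLinearMap (Matrix.toEuclideanLin B)).le_opNorm ew
    _ = matOpNorm B * ‖ev‖ * ‖ew‖ := by ring

lemma dot_self_eq {d : ℕ} (v : Fin d → ℝ) :
    v ⬝ᵥ v = ‖(WithLp.equiv 2 (Fin d → ℝ)).symm v‖ ^ 2 := by
  rw [← real_inner_self_eq_norm_sq]
  simp only [WithLp.equiv_symm_apply, PiLp.inner_apply, RCLike.inner_apply, conj_trivial, dotProduct]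

lemma lag_half (T t : ℕ) (f : ℕ → ℝ) (hf : ∀ l, 0 ≤ f l)
    (s : Finset ℕ) (g : ℕ → ℕ)
    (hg : ∀ t' ∈ s, ((t : ℤ) - (t' : ℤ)).natAbs = g t')
    (hinj : Set.InjOn g s) (him : ∀ t' ∈ s, g t' < T) :
    ∑ t' ∈ s, f ((t : ℤ) - (t' : ℤ)).natAbs ≤ ∑ l ∈ Finset.range T, f l := by
  rw [Finset.sum_congr rfl fun t' h => by rw [hg t' h]]
  rw [← Finset.sum_image (fun x hx y hy => hinj hx hy)]
  refine Finset.sum_le_sum_of_subset_of_nonneg ?_ (fun l _ _ => hf l)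
  intro l hl
  obtain ⟨t', ht', rfl⟩ := Finset.mem_image.mp hl
  exact Finset.mem_range.mpr (him t' ht')

lemma lag_sum (T : ℕ) (f : ℕ → ℝ) (hf : ∀ l, 0 ≤ f l) (t : ℕ) (ht : t < T) :
    ∑ t' ∈ Finset.range T, f ((t : ℤ) - (t' : ℤ)).natAbs
      ≤ 2 * ∑ l ∈ Finset.range T, f l := by
  classical
  rw [← Finset.sum_filter_add_sum_filter_not (Finset.range T) (· ≤ t), two_mul]
  gcongr
  · refine lag_half T t f hf _ (fun t' => t - t')
      (fun t' h => ?_) (fun x hx y hy hxy => ?_) (fun t' h => ?_)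
    · have := (Finset.mem_filter.mp h).2
      show ((t : ℤ) - (t' : ℤ)).natAbs = t - t'
      omega
    · have hx' := (Finset.mem_filter.mp hx).2
      have hy' := (Finset.mem_filter.mp hy).2
      have : t - x = t - y := hxy
      omega
    · have := (Finset.mem_filter.mp h).2
      show t - t' < T
      omega
  · refine lag_half T t f hf _ (fun t' => t' - t)
      (fun t' h => ?_) (fun x hx y hy hxy => ?_) (fun t' h => ?_)
    · have := (Finset.mem_filter.mp h).2
      simp only [not_le, decide_eq_true_eq] at this
      show ((t : ℤ) - (t' : ℤ)).natAbs = t' - t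
      omega
    · have hx' := (Finset.mem_filter.mp hx).2
      have hy' := (Finset.mem_filter.mp hy).2
      simp only [not_le, decide_eq_true_eq] at hx' hy'
      have : x - t = y - t := hxy
      omega
    · have := Finset.mem_range.mp (Finset.mem_filter.mp h).1
      show t' - t < T
      omega

lemma quad_bound (m : ℕ) (Mc : ℝ) (τ : Fin m → Fin m → ℝ) (x : Fin m → ℝ)
    (hx : ∀ i, 0 ≤ x i) (hτ : ∀ i i', 0 ≤ τ i i')
    (hsymm : ∀ i i', τ i i' = τ i' i) (hrow : ∀ i, ∑ i', τ i i' ≤ Mc) :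
    ∑ i, ∑ i', τ i i' * x i * x i' ≤ Mc * ∑ i, x i ^ 2 := by
  have step : ∑ i, ∑ i', τ i i' * x i * x i'
      ≤ ∑ i, ∑ i', (τ i i' * x i ^ 2 + τ i i' * x i' ^ 2) / 2 := by
    refine Finset.sum_le_sum fun i _ => Finset.sum_le_sum fun i' _ => ?_
    nlinarith [mul_self_nonneg (x i - x i'), hτ i i', hx i, hx i']
  refine step.trans ?_
  have hA : ∑ i, ∑ i', τ i i' * x i ^ 2 ≤ Mc * ∑ i, x i ^ 2 := by
    rw [Finset.mul_sum]
    refine Finset.sum_le_sum fun i _ => ?_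
    rw [← Finset.sum_mul]
    exact mul_le_mul_of_nonneg_right (hrow i) (sq_nonneg _)
  have hB : ∑ i, ∑ i', τ i i' * x i' ^ 2 ≤ Mc * ∑ i, x i ^ 2 := by
    rw [Finset.sum_comm, Finset.mul_sum]
    refine Finset.sum_le_sum fun i' _ => ?_
    rw [← Finset.sum_mul]
    refine mul_le_mul_of_nonneg_right ?_ (sq_nonneg _)
    calc ∑ i, τ i i' = ∑ i, τ i' i := Finset.sum_congr rfl fun i _ => hsymm i i'
      _ ≤ Mc := hrow i'
  have hsplit : ∑ i, ∑ i', (τ i i' * x i ^ 2 + τ i i' * x i' ^ 2) / 2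
      = ((∑ i, ∑ i', τ i i' * x i ^ 2) + ∑ i, ∑ i', τ i i' * x i' ^ 2) / 2 := by
    simp only [div_eq_mul_inv, ← Finset.sum_mul, ← Finset.sum_add_distrib, Finset.sum_mul]
  rw [hsplit]
  linarith

lemma sum_comm4 {α : Type*} [AddCommMonoid α] (R : Finset ℕ) {m : ℕ}
    (g : ℕ → ℕ → Fin m → Fin m → α) :
    ∑ t ∈ R, ∑ t' ∈ R, ∑ i, ∑ i', g t t' i i'
      = ∑ i, ∑ i', ∑ t ∈ R, ∑ t' ∈ R, g t t' i i' :=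
  calc ∑ t ∈ R, ∑ t' ∈ R, ∑ i, ∑ i', g t t' i i'
      = ∑ t ∈ R, ∑ i, ∑ t' ∈ R, ∑ i', g t t' i i' :=
        Finset.sum_congr rfl fun t _ => Finset.sum_comm
    _ = ∑ i, ∑ t ∈ R, ∑ t' ∈ R, ∑ i', g t t' i i' := Finset.sum_comm
    _ = ∑ i, ∑ t ∈ R, ∑ i', ∑ t' ∈ R, g t t' i i' :=
        Finset.sum_congr rfl fun i _ => Finset.sum_congr rfl fun t _ => Finset.sum_comm
    _ = ∑ i, ∑ i', ∑ t ∈ R, ∑ t' ∈ R, g t t' i i' :=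
        Finset.sum_congr rfl fun i _ => Finset.sum_comm

/-- **Deterministic content of Lemma B.4 of the paper.**
With blockwise matrices `A_{i i', l}` of operator norm at most `a`, scalars `σ_{i i', l}`
whose absolute lag-sums are bounded by symmetric quantities `τ_{i i'}` with row sums
bounded by `M`, the big quadratic form `∑_{t,t'} ∑_{i,i'} σ_{i i', |t−t'|} vᵢᵀ A_{i i', |t−t'|} v_{i'}`
is bounded in absolute value by `2 T a M ∑_i ‖v_i‖²`. -/
theorem block_covariance_quadratic_form_bound
    (m T d : ℕ) (hm : 1 ≤ m) (hT : 1 ≤ T) (hd : 1 ≤ d)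
    (a M : ℝ) (ha : 0 ≤ a) (hM : 0 ≤ M)
    (A : Fin m → Fin m → ℕ → Matrix (Fin d) (Fin d) ℝ)
    (σ : Fin m → Fin m → ℕ → ℝ)
    (τ : Fin m → Fin m → ℝ)
    (hA : ∀ i i' l, l < T → matOpNorm (A i i' l) ≤ a)
    (hτnonneg : ∀ i i', 0 ≤ τ i i')
    (hτsymm : ∀ i i', τ i i' = τ i' i)
    (hστ : ∀ i i', ∑ l ∈ Finset.range T, |σ i i' l| ≤ τ i i')
    (hrow : ∀ i, ∑ i', τ i i' ≤ M) :
    ∀ v : Fin m → Fin d → ℝ,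
      |∑ t ∈ Finset.range T, ∑ t' ∈ Finset.range T, ∑ i, ∑ i',
          σ i i' ((t : ℤ) - (t' : ℤ)).natAbs *
            (v i ⬝ᵥ (A i i' ((t : ℤ) - (t' : ℤ)).natAbs) *ᵥ v i')| ≤
        2 * T * a * M * ∑ i, v i ⬝ᵥ v i := by
  intro v
  set R := Finset.range T with hR
  set nv : Fin m → ℝ := fun i => ‖(WithLp.equiv 2 (Fin d → ℝ)).symm (v i)‖ with hnv
  have hnv0 : ∀ i, 0 ≤ nv i := fun i => norm_nonneg _
  -- Step 1+2: triangle inequality and per-term bound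
  have step12 : |∑ t ∈ R, ∑ t' ∈ R, ∑ i, ∑ i',
        σ i i' ((t : ℤ) - (t' : ℤ)).natAbs *
          (v i ⬝ᵥ (A i i' ((t : ℤ) - (t' : ℤ)).natAbs) *ᵥ v i')| ≤
      ∑ t ∈ R, ∑ t' ∈ R, ∑ i, ∑ i',
        |σ i i' ((t : ℤ) - (t' : ℤ)).natAbs| * (a * nv i * nv i') := by
    refine (Finset.abs_sum_le_sum_abs _ _).trans ?_
    refine Finset.sum_le_sum fun t ht => ?_
    refine (Finset.abs_sum_le_sum_abs _ _).trans ?_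
    refine Finset.sum_le_sum fun t' ht' => ?_
    refine (Finset.abs_sum_le_sum_abs _ _).trans ?_
    refine Finset.sum_le_sum fun i _ => ?_
    refine (Finset.abs_sum_le_sum_abs _ _).trans ?_
    refine Finset.sum_le_sum fun i' _ => ?_
    rw [abs_mul]
    refine mul_le_mul_of_nonneg_left ?_ (abs_nonneg _)
    have hlT : ((t : ℤ) - (t' : ℤ)).natAbs < T := by
      have h1 := Finset.mem_range.mp ht
      have h2 := Finset.mem_range.mp ht'
      omega
    refine (dot_bound _ _ _).trans ?_
    have := hA i i' _ hlT
    exact mul_le_mul_of_nonneg_right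
      (mul_le_mul_of_nonneg_right this (hnv0 i)) (hnv0 i')
  refine step12.trans ?_
  rw [sum_comm4]
  -- Step 4: bound the t,t' double sums
  have step4 : ∀ i i', ∑ t ∈ R, ∑ t' ∈ R,
      |σ i i' ((t : ℤ) - (t' : ℤ)).natAbs| * (a * nv i * nv i')
      ≤ (2 * T) * (a * (τ i i' * nv i * nv i')) := by
    intro i i'
    have hnn : 0 ≤ a * nv i * nv i' :=
      mul_nonneg (mul_nonneg ha (hnv0 i)) (hnv0 i')
    calc ∑ t ∈ R, ∑ t' ∈ R, |σ i i' ((t : ℤ) - (t' : ℤ)).natAbs| * (a * nv i * nv i')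
        = (∑ t ∈ R, ∑ t' ∈ R, |σ i i' ((t : ℤ) - (t' : ℤ)).natAbs|) * (a * nv i * nv i') := by
          rw [Finset.sum_mul]
          exact Finset.sum_congr rfl fun t _ => by rw [Finset.sum_mul]
      _ ≤ (∑ t ∈ R, 2 * ∑ l ∈ Finset.range T, |σ i i' l|) * (a * nv i * nv i') := by
          refine mul_le_mul_of_nonneg_right (Finset.sum_le_sum fun t ht => ?_) hnn
          exact lag_sum T (fun l => |σ i i' l|) (fun l => abs_nonneg _) t (Finset.mem_range.mp ht)
      _ ≤ (∑ t ∈ R, 2 * τ i i') * (a * nv i * nv i') := by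
          refine mul_le_mul_of_nonneg_right (Finset.sum_le_sum fun t _ => ?_) hnn
          exact mul_le_mul_of_nonneg_left (hστ i i') (by norm_num)
      _ = (2 * T) * (a * (τ i i' * nv i * nv i')) := by
          rw [Finset.sum_const, hR, Finset.card_range, nsmul_eq_mul]
          ring
  calc ∑ i, ∑ i', ∑ t ∈ R, ∑ t' ∈ R,
        |σ i i' ((t : ℤ) - (t' : ℤ)).natAbs| * (a * nv i * nv i')
      ≤ ∑ i, ∑ i', (2 * T) * (a * (τ i i' * nv i * nv i')) :=
        Finset.sum_le_sum fun i _ => Finset.sum_le_sum fun i' _ => step4 i i'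
    _ = (2 * T * a) * ∑ i, ∑ i', τ i i' * nv i * nv i' := by
        rw [Finset.mul_sum]
        refine Finset.sum_congr rfl fun i _ => ?_
        rw [Finset.mul_sum]
        exact Finset.sum_congr rfl fun i' _ => by ring
    _ ≤ (2 * T * a) * (M * ∑ i, nv i ^ 2) := by
        refine mul_le_mul_of_nonneg_left ?_ ?_
        · exact quad_bound m M τ nv hnv0 hτnonneg hτsymm hrow
        · positivity
    _ = 2 * T * a * M * ∑ i, v i ⬝ᵥ v i := by
        rw [Finset.sum_congr rfl fun i _ => dot_self_eq (v i)]
        ring
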